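/- Let n ≥ 2 and let q, t be real with 0 < q < 1 and 0 < t < 1. Suppose f : ℂ^n → ℂ is invariant under simultaneous q-dilation, i.e. f(q z_1, …, q z_n) = f(z_1, …, z_n) for all z ∈ ℂ^n. Then for every z ∈ ℂ^n with pairwise distinct coordinates, (D^{n−1}(q,t) f)(z) = t^{n(n+1)/2} · t^{−1} · Σ_{i=1}^n [∏_{j ≠ i} (t^{−1} z_i − z_j)/(z_i − z_j)] · f(z with z_i replaced by q^{−1} z_i); that is, D^{n−1}(q,t) agrees with t^{n(n+1)/2} D^1(q^{−1}, t^{−1}) on q-dilation-invariant functions. -/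

import Mathlib

/-- The Macdonald q-difference operator `D^m(q,t)`. -/
noncomputable def macD (n : ℕ) (q t : ℝ) (m : ℕ) (f : (Fin n → ℂ) → ℂ)
    (z : Fin n → ℂ) : ℂ :=
  (t : ℂ) ^ (m * (m + 1) / 2) *
    ∑ I ∈ (Finset.univ : Finset (Fin n)).powersetCard m,
      (∏ i ∈ I, ∏ j ∈ Iᶜ, ((t : ℂ) * z i - z j) / (z i - z j)) *
        f (fun i => if i ∈ I then (q : ℂ) * z i else z i)

/-- On functions invariant under simultaneous q-dilation, `D^{n-1}(q,t)` agrees with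
`t^{n(n+1)/2} D^1(q⁻¹,t⁻¹)`. -/
theorem stmt2 (n : ℕ) (hn : 2 ≤ n) (q t : ℝ)
    (hq0 : 0 < q) (hq1 : q < 1) (ht0 : 0 < t) (ht1 : t < 1)
    (f : (Fin n → ℂ) → ℂ)
    (hf : ∀ z : Fin n → ℂ, f (fun i => (q : ℂ) * z i) = f z)
    (z : Fin n → ℂ) (hz : ∀ i j : Fin n, i ≠ j → z i ≠ z j) :
    macD n q t (n - 1) f z =
      (t : ℂ) ^ (n * (n + 1) / 2) * (t : ℂ)⁻¹ *
        ∑ i : Fin n,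
          (∏ j ∈ Finset.univ.erase i, ((t : ℂ)⁻¹ * z i - z j) / (z i - z j)) *
            f (Function.update z i ((q : ℂ)⁻¹ * z i)) := by
  have htC : (t : ℂ) ≠ 0 := by exact_mod_cast ht0.ne'
  have hqC : (q : ℂ) ≠ 0 := by exact_mod_cast hq0.ne'
  -- the index set is the image of singleton-complements
  have hset : ((Finset.univ : Finset (Fin n)).powersetCard (n - 1))
      = Finset.univ.image (fun i : Fin n => ({i} : Finset (Fin n))ᶜ) := by
    ext I
    simp only [Finset.mem_powersetCard, Finset.mem_image, Finset.mem_univ, true_and]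
    constructor
    · rintro ⟨-, hcard⟩
      have h1 : Iᶜ.card = 1 := by
        have h2 := Finset.card_compl I
        simp only [Fintype.card_fin] at h2
        omega
      obtain ⟨i, hi⟩ := Finset.card_eq_one.mp h1
      exact ⟨i, by rw [← hi, compl_compl]⟩
    · rintro ⟨i, rfl⟩
      refine ⟨Finset.subset_univ _, ?_⟩
      simp [Finset.card_compl]
  have hinj : ∀ a ∈ (Finset.univ : Finset (Fin n)), ∀ b ∈ (Finset.univ : Finset (Fin n)),
      ({a} : Finset (Fin n))ᶜ = ({b} : Finset (Fin n))ᶜ → a = b := by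
    intro a _ b _ h
    have := compl_injective h
    simpa using this
  unfold macD
  rw [hset, Finset.sum_image hinj]
  -- termwise identification
  have hterm : ∀ i : Fin n,
      (∏ a ∈ ({i} : Finset (Fin n))ᶜ, ∏ j ∈ (({i} : Finset (Fin n))ᶜ)ᶜ,
          ((t : ℂ) * z a - z j) / (z a - z j)) *
        f (fun k => if k ∈ ({i} : Finset (Fin n))ᶜ then (q : ℂ) * z k else z k)
      = (t : ℂ) ^ (n - 1) *
        ((∏ j ∈ Finset.univ.erase i, ((t : ℂ)⁻¹ * z i - z j) / (z i - z j)) *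
          f (Function.update z i ((q : ℂ)⁻¹ * z i))) := by
    intro i
    have hcompl : (({i} : Finset (Fin n))ᶜ) = Finset.univ.erase i := by
      ext a; simp [Finset.mem_erase, eq_comm, Ne]
    have hfval : f (fun k => if k ∈ ({i} : Finset (Fin n))ᶜ then (q : ℂ) * z k else z k)
        = f (Function.update z i ((q : ℂ)⁻¹ * z i)) := by
      rw [← hf (Function.update z i ((q : ℂ)⁻¹ * z i))]
      congr 1
      funext k
      by_cases hk : k = i
      · subst hk
        simp [Function.update_self, mul_comm, hqC]
        field_simp
      · simp [hk, Function.update_of_ne hk, hcompl, Finset.mem_erase]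
    rw [compl_compl, hfval, hcompl]
    have hprod : ∀ a ∈ Finset.univ.erase i,
        (∏ j ∈ ({i} : Finset (Fin n)), ((t : ℂ) * z a - z j) / (z a - z j))
        = (t : ℂ) * (((t : ℂ)⁻¹ * z i - z a) / (z i - z a)) := by
      intro a ha
      have hai : a ≠ i := (Finset.mem_erase.mp ha).1
      have hne : z a - z i ≠ 0 := sub_ne_zero.mpr (hz a i hai)
      have hne' : z i - z a ≠ 0 := sub_ne_zero.mpr (hz i a hai.symm)
      rw [Finset.prod_singleton]
      field_simp
      ring
    rw [Finset.prod_congr rfl hprod, Finset.prod_mul_distrib, Finset.prod_const]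
    have hcard : (Finset.univ.erase i).card = n - 1 := by
      simp [Finset.card_erase_of_mem]
    rw [hcard]
    ring
  rw [Finset.sum_congr rfl (fun i _ => hterm i), ← Finset.mul_sum]
  rw [← mul_assoc]
  congr 1
  -- exponent arithmetic: t^((n-1)*n/2) * t^(n-1) = t^(n*(n+1)/2) * t⁻¹
  have c1 : n * (n + 1) / 2 = (n + 1).choose 2 := by
    rw [Nat.choose_two_right]; simp [Nat.mul_comm]
  have c2 : (n - 1) * (n - 1 + 1) / 2 = n.choose 2 := by
    rw [Nat.choose_two_right]
    have h1 : n - 1 + 1 = n := Nat.sub_add_cancel (by omega)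
    rw [h1, Nat.mul_comm]
  have hexp : n * (n + 1) / 2 = (n - 1) * (n - 1 + 1) / 2 + (n - 1) + 1 := by
    rw [c1, c2, Nat.choose_succ_succ, Nat.choose_one_right, add_assoc,
      Nat.sub_add_cancel (by omega : 1 ≤ n), Nat.add_comm]
  rw [hexp, pow_succ, pow_add]
  field_simp
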